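/- arXiv:1611.05999 — 5 statements merged into one kernel-verified Lean document; each statement's English description precedes it below -/
import Mathlib

section
/- Let a > 0, let α ∈ (0,2), and let σ : ℝ² × [0,∞) → ℝ be measurable and bounded (|σ(x,t)| ≤ C₀ for all x, t). Then for every x ∈ ℝ² and every t ≥ 0 the function y ↦ |G(x,y,t)|^α is integrable over ℝ², i.e. ∫_{ℝ²} |G(x,y,t)|^α dy < ∞. (This is the condition guaranteeing that the candidate solution U(x,t) = ∫_{ℝ²} G(x,y,t) M(dy) of the planar stochastic wave equation is well defined as an integral with respect to a symmetric α-stable random measure.) -/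
open MeasureTheory Real

/-- The planar wave kernel: `G(x,y,t) = (1/(2πa)) ∫₀^{t - |x-y|/a} σ(y,τ)/√(a²(t-τ)² - |x-y|²) dτ`
when `|x-y| < a t`, and `0` otherwise. -/
noncomputable def waveKernel (a : ℝ) (σ : EuclideanSpace ℝ (Fin 2) → ℝ → ℝ)
    (x y : EuclideanSpace ℝ (Fin 2)) (t : ℝ) : ℝ :=
  if dist x y < a * t then
    (1 / (2 * Real.pi * a)) *
      ∫ τ in (0 : ℝ)..(t - dist x y / a),
        σ y τ / Real.sqrt (a ^ 2 * (t - τ) ^ 2 - (dist x y) ^ 2)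
  else 0

/-- Coordinates are `1`-Lipschitz with respect to the Euclidean distance. -/
lemma waveKernel_coord_le_dist (i : Fin 2) (x y : EuclideanSpace ℝ (Fin 2)) :
    |y i - x i| ≤ dist x y := by
  rw [EuclideanSpace.dist_eq]
  have h1 : |y i - x i| = Real.sqrt (dist (x i) (y i) ^ 2) := by
    rw [Real.sqrt_sq dist_nonneg, Real.dist_eq, abs_sub_comm]
  rw [h1]
  apply Real.sqrt_le_sqrt
  exact Finset.single_le_sum (f := fun j => dist (x j) (y j) ^ 2)
    (fun j _ => sq_nonneg _) (Finset.mem_univ i)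

/-- Coordinate hyperplanes in the plane are null. -/
lemma waveKernel_hyperplane_null (c : ℝ) :
    volume {y : EuclideanSpace ℝ (Fin 2) | y 0 = c} = 0 := by
  have hmp := PiLp.volume_preserving_ofLp (Fin 2)
  have hs : MeasurableSet {z : Fin 2 → ℝ | z 0 = c} := by
    have : {z : Fin 2 → ℝ | z 0 = c} = (fun z : Fin 2 → ℝ => z 0) ⁻¹' {c} := rfl
    rw [this]
    exact (measurable_pi_apply 0) (measurableSet_singleton c)
  have h2 := hmp.measure_preimage hs.nullMeasurableSet
  have heq : (@WithLp.ofLp 2 (Fin 2 → ℝ)) ⁻¹' {z : Fin 2 → ℝ | z 0 = c}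
      = {y : EuclideanSpace ℝ (Fin 2) | y 0 = c} := rfl
  rw [heq] at h2
  rw [h2, volume_pi, Measure.pi_hyperplane]

/-- One-dimensional integrability of `|u - c| ^ (-β)` on a compact interval, for `β < 1`. -/
lemma waveKernel_oneDim_integrable (c R β : ℝ) (hR : 0 ≤ R) (hβ1 : β < 1) :
    IntegrableOn (fun u : ℝ => |u - c| ^ (-β)) (Set.Icc (c - R) (c + R)) := by
  have hrpow : IntervalIntegrable (fun s : ℝ => s ^ (-β)) volume 0 R :=
    intervalIntegral.intervalIntegrable_rpow' (by linarith)
  have hright : IntegrableOn (fun u : ℝ => |u - c| ^ (-β)) (Set.Icc c (c + R)) := by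
    have h1 : IntervalIntegrable (fun u : ℝ => (u - c) ^ (-β)) volume (0 + c) (R + c) :=
      hrpow.comp_sub_right c
    have h2 : IntegrableOn (fun u : ℝ => (u - c) ^ (-β)) (Set.Icc c (c + R)) := by
      rw [integrableOn_Icc_iff_integrableOn_Ioc]
      have := (intervalIntegrable_iff_integrableOn_Ioc_of_le
        (by linarith : (0:ℝ) + c ≤ R + c)).1 h1
      simpa [zero_add, add_comm R c] using this
    apply h2.congr_fun ?_ measurableSet_Icc
    intro u hu
    show (u - c) ^ (-β) = |u - c| ^ (-β)
    rw [abs_of_nonneg (by linarith [hu.1] : (0:ℝ) ≤ u - c)]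
  have hleft : IntegrableOn (fun u : ℝ => |u - c| ^ (-β)) (Set.Icc (c - R) c) := by
    have h1 : IntervalIntegrable (fun u : ℝ => (c - u) ^ (-β)) volume (c - 0) (c - R) :=
      hrpow.comp_sub_left c
    have h2 : IntegrableOn (fun u : ℝ => (c - u) ^ (-β)) (Set.Icc (c - R) c) := by
      rw [integrableOn_Icc_iff_integrableOn_Ioc]
      have := (intervalIntegrable_iff_integrableOn_Ioc_of_le
        (by linarith : c - R ≤ c - 0)).1 h1.symm
      simpa using this
    apply h2.congr_fun ?_ measurableSet_Icc
    intro u hu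
    show (c - u) ^ (-β) = |u - c| ^ (-β)
    rw [abs_sub_comm, abs_of_nonneg (by linarith [hu.2] : (0:ℝ) ≤ c - u)]
  have := hleft.union hright
  rwa [Set.Icc_union_Icc_eq_Icc (by linarith) (by linarith)] at this

/-- Transfer of product-form integrability to the plane. -/
lemma waveKernel_prod_integrable (F₀ F₁ : ℝ → ℝ) (h0 : Integrable F₀) (h1 : Integrable F₁) :
    Integrable (fun y : EuclideanSpace ℝ (Fin 2) => F₀ (y 0) * F₁ (y 1)) := by
  have hprod : Integrable (fun p : ℝ × ℝ => F₀ p.1 * F₁ p.2)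
      ((volume : Measure ℝ).prod volume) := h0.mul_prod h1
  have hpi : Integrable (fun z : Fin 2 → ℝ => F₀ (z 0) * F₁ (z 1))
      (volume : Measure (Fin 2 → ℝ)) := by
    have hmp : MeasurePreserving (MeasurableEquiv.piFinTwo (fun _ => ℝ))
        (volume : Measure (Fin 2 → ℝ)) ((volume : Measure ℝ).prod volume) := by
      exact volume_preserving_piFinTwo _
    exact (hmp.integrable_comp_emb (MeasurableEquiv.measurableEmbedding _)).2 hprod
  have hmp2 := PiLp.volume_preserving_ofLp (Fin 2)
  exact (hmp2.integrable_comp_emb (MeasurableEquiv.toLp 2 (Fin 2 → ℝ)).symm.measurableEmbedding).2 hpi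

/-- Measurability of the wave kernel in the space variable. -/
lemma waveKernel_measurable (a : ℝ) (ha : 0 < a) (σ : EuclideanSpace ℝ (Fin 2) → ℝ → ℝ)
    (hσ_meas : Measurable (Function.uncurry σ))
    (x : EuclideanSpace ℝ (Fin 2)) (t : ℝ) :
    Measurable (fun y : EuclideanSpace ℝ (Fin 2) => waveKernel a σ x y t) := by
  have hker : (fun y : EuclideanSpace ℝ (Fin 2) => waveKernel a σ x y t) =
      (fun y : EuclideanSpace ℝ (Fin 2) =>
      if dist x y < a * t then
        (1 / (2 * Real.pi * a)) *
          ∫ τ in (0 : ℝ)..(t - dist x y / a),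
            σ y τ / Real.sqrt (a ^ 2 * (t - τ) ^ 2 - (dist x y) ^ 2)
      else 0) := by
    funext y; rw [waveKernel]
  rw [hker]
  set Φ : (EuclideanSpace ℝ (Fin 2)) × ℝ → ℝ := fun p =>
    Set.indicator {q : (EuclideanSpace ℝ (Fin 2)) × ℝ | 0 < q.2 ∧ q.2 ≤ t - dist x q.1 / a}
      (fun q => σ q.1 q.2 / Real.sqrt (a ^ 2 * (t - q.2) ^ 2 - dist x q.1 ^ 2)) p with hΦ
  have hΦm : Measurable Φ := by
    apply Measurable.indicator
    · apply Measurable.div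
      · exact hσ_meas
      · apply Continuous.measurable
        apply Real.continuous_sqrt.comp
        exact ((continuous_const.mul ((continuous_const.sub continuous_snd).pow 2)).sub
          ((continuous_const.dist continuous_fst).pow 2))
    · apply MeasurableSet.inter
      · exact measurableSet_lt measurable_const measurable_snd
      · exact measurableSet_le measurable_snd
          (Continuous.measurable
            (continuous_const.sub ((continuous_const.dist continuous_fst).div_const a)))
  have hH : Measurable (fun y => ∫ τ, Φ (y, τ)) :=
    hΦm.stronglyMeasurable.integral_prod_right'.measurable
  have heq : (fun y : EuclideanSpace ℝ (Fin 2) =>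
      if dist x y < a * t then
        (1 / (2 * Real.pi * a)) *
          ∫ τ in (0 : ℝ)..(t - dist x y / a),
            σ y τ / Real.sqrt (a ^ 2 * (t - τ) ^ 2 - (dist x y) ^ 2)
      else 0)
      = fun y => if dist x y < a * t then (1 / (2 * Real.pi * a)) * (∫ τ, Φ (y, τ)) else 0 := by
    funext y
    split_ifs with h
    · congr 1
      have hL : (0:ℝ) ≤ t - dist x y / a := by
        have : dist x y / a < t := (div_lt_iff₀ ha).2 (by linarith [h])
        linarith
      rw [intervalIntegral.integral_of_le hL, ← integral_indicator measurableSet_Ioc]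
      congr 1
    · rfl
  rw [heq]
  exact Measurable.ite
    (measurableSet_lt (Continuous.measurable (continuous_const.dist continuous_id))
      measurable_const)
    (measurable_const.mul hH) measurable_const

/-- The key pointwise estimate: away from the singularity the kernel is bounded by a constant
times `|x - y| ^ (-1/2)`. -/
lemma waveKernel_le (a : ℝ) (ha : 0 < a) (σ : EuclideanSpace ℝ (Fin 2) → ℝ → ℝ) (C₀ : ℝ)
    (hσ_bdd : ∀ x : EuclideanSpace ℝ (Fin 2), ∀ t : ℝ, 0 ≤ t → |σ x t| ≤ C₀)
    (x : EuclideanSpace ℝ (Fin 2)) (t : ℝ) (ht : 0 ≤ t)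
    (y : EuclideanSpace ℝ (Fin 2)) (hr : 0 < dist x y) :
    |waveKernel a σ x y t| ≤
      (C₀ * Real.sqrt t / (Real.pi * a * Real.sqrt a)) * (Real.sqrt (dist x y))⁻¹ := by
  have hC₀ : 0 ≤ C₀ := le_trans (abs_nonneg _) (hσ_bdd x 0 le_rfl)
  have hπ := Real.pi_pos
  set r := dist x y with hrdef
  have hK : 0 ≤ C₀ * Real.sqrt t / (Real.pi * a * Real.sqrt a) * (Real.sqrt r)⁻¹ := by positivity
  rw [waveKernel]
  split_ifs with hlt
  · set L := t - r / a with hLdef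
    have hL : 0 < L := by
      have : r / a < t := (div_lt_iff₀ ha).2 (by linarith)
      simp only [hLdef]; linarith
    have hLt : L ≤ t := by
      have : 0 ≤ r / a := div_nonneg hr.le ha.le
      simp only [hLdef]; linarith
    have hsar : 0 < Real.sqrt (a * r) := Real.sqrt_pos.2 (by positivity)
    have hb : ∀ τ ∈ Set.uIoc (0:ℝ) L,
        ‖σ y τ / Real.sqrt (a ^ 2 * (t - τ) ^ 2 - r ^ 2)‖ ≤
          (C₀ / Real.sqrt (a * r)) * (Real.sqrt (L - τ))⁻¹ := by
      intro τ hτ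
      rw [Set.uIoc_of_le hL.le] at hτ
      obtain ⟨hτ0, hτL⟩ := hτ
      have hσb : |σ y τ| ≤ C₀ := hσ_bdd y τ hτ0.le
      rcases eq_or_lt_of_le hτL with heq | hlt2
      · have hD : a ^ 2 * (t - τ) ^ 2 - r ^ 2 = 0 := by
          rw [heq, hLdef]
          field_simp
          ring
        rw [hD, Real.sqrt_zero, div_zero, norm_zero, heq, sub_self, Real.sqrt_zero, inv_zero,
          mul_zero]
      · have hLτ : 0 < L - τ := by linarith
        have haL : a * (L - τ) = a * (t - τ) - r := by
          rw [hLdef]; field_simp; ring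
        have haτ : r ≤ a * (t - τ) := by nlinarith [mul_pos ha hLτ]
        have hDge : Real.sqrt (a * r) * Real.sqrt (L - τ) ≤
            Real.sqrt (a ^ 2 * (t - τ) ^ 2 - r ^ 2) := by
          rw [← Real.sqrt_mul (by positivity)]
          apply Real.sqrt_le_sqrt
          nlinarith [mul_pos ha hLτ, hr.le]
        have hd : 0 < Real.sqrt (a * r) * Real.sqrt (L - τ) :=
          mul_pos hsar (Real.sqrt_pos.2 hLτ)
        have h1 : ‖σ y τ / Real.sqrt (a ^ 2 * (t - τ) ^ 2 - r ^ 2)‖ =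
            |σ y τ| / Real.sqrt (a ^ 2 * (t - τ) ^ 2 - r ^ 2) := by
          rw [Real.norm_eq_abs, abs_div, abs_of_nonneg (Real.sqrt_nonneg _)]
        rw [h1]
        calc |σ y τ| / Real.sqrt (a ^ 2 * (t - τ) ^ 2 - r ^ 2)
            ≤ C₀ / (Real.sqrt (a * r) * Real.sqrt (L - τ)) := by
              apply div_le_div₀ hC₀ hσb hd hDge
          _ = (C₀ / Real.sqrt (a * r)) * (Real.sqrt (L - τ))⁻¹ := by
              rw [div_mul_eq_div_div, div_eq_mul_inv]
    have hbase : IntervalIntegrable (fun s : ℝ => (Real.sqrt s)⁻¹) volume 0 L := by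
      rw [intervalIntegrable_iff_integrableOn_Ioc_of_le hL.le]
      have h0 : IntegrableOn (fun s : ℝ => s ^ (-(1/2) : ℝ)) (Set.Ioc 0 L) :=
        (intervalIntegrable_iff_integrableOn_Ioc_of_le hL.le).1
          (intervalIntegral.intervalIntegrable_rpow' (by norm_num))
      apply h0.congr_fun ?_ measurableSet_Ioc
      intro s hs
      show s ^ (-(1/2) : ℝ) = (Real.sqrt s)⁻¹
      rw [Real.sqrt_eq_rpow, ← Real.rpow_neg hs.1.le]
    have hcomp : IntervalIntegrable (fun τ : ℝ => (Real.sqrt (L - τ))⁻¹) volume 0 L := by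
      have := (hbase.comp_sub_left L).symm
      simpa using this
    have hbnd : IntervalIntegrable
        (fun τ : ℝ => (C₀ / Real.sqrt (a * r)) * (Real.sqrt (L - τ))⁻¹) volume 0 L :=
      hcomp.const_mul _
    have hle := intervalIntegral.norm_integral_le_of_norm_le hL.le
      (Filter.Eventually.of_forall fun τ hτ => hb τ (by rwa [Set.uIoc_of_le hL.le])) hbnd
    have hval : (∫ τ in (0:ℝ)..L, (C₀ / Real.sqrt (a * r)) * (Real.sqrt (L - τ))⁻¹) =
        (C₀ / Real.sqrt (a * r)) * (2 * Real.sqrt L) := by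
      rw [intervalIntegral.integral_const_mul]
      congr 1
      have h1 : (∫ τ in (0:ℝ)..L, (Real.sqrt (L - τ))⁻¹) = ∫ s in (0:ℝ)..L, (Real.sqrt s)⁻¹ := by
        have := intervalIntegral.integral_comp_sub_left (a := 0) (b := L)
          (fun s => (Real.sqrt s)⁻¹) L
        simpa using this
      rw [h1]
      have h2 : (∫ s in (0:ℝ)..L, (Real.sqrt s)⁻¹) = ∫ s in (0:ℝ)..L, s ^ (-(1/2) : ℝ) := by
        apply intervalIntegral.integral_congr
        intro s hs
        rw [Set.uIcc_of_le hL.le] at hs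
        rcases eq_or_lt_of_le hs.1 with h0 | h0
        · rw [← h0]
          simp [Real.zero_rpow]
        · show (Real.sqrt s)⁻¹ = s ^ (-(1/2) : ℝ)
          rw [Real.sqrt_eq_rpow, ← Real.rpow_neg h0.le]
      rw [h2, integral_rpow (Or.inl (by norm_num))]
      norm_num
      rw [Real.sqrt_eq_rpow]
      ring
    rw [hval] at hle
    have habs : |(C₀ / Real.sqrt (a * r)) * (2 * Real.sqrt L)| =
        (C₀ / Real.sqrt (a * r)) * (2 * Real.sqrt L) := by
      apply abs_of_nonneg; positivity
    have hmain : |∫ τ in (0:ℝ)..(t - r / a),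
        σ y τ / Real.sqrt (a ^ 2 * (t - τ) ^ 2 - r ^ 2)| ≤
        (C₀ / Real.sqrt (a * r)) * (2 * Real.sqrt L) := hle
    calc |1 / (2 * Real.pi * a) * ∫ τ in (0:ℝ)..(t - r / a),
          σ y τ / Real.sqrt (a ^ 2 * (t - τ) ^ 2 - r ^ 2)|
        = (1 / (2 * Real.pi * a)) * |∫ τ in (0:ℝ)..(t - r / a),
          σ y τ / Real.sqrt (a ^ 2 * (t - τ) ^ 2 - r ^ 2)| := by
          rw [abs_mul, abs_of_nonneg (by positivity : (0:ℝ) ≤ 1 / (2 * Real.pi * a))]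
      _ ≤ (1 / (2 * Real.pi * a)) * ((C₀ / Real.sqrt (a * r)) * (2 * Real.sqrt L)) := by
          apply mul_le_mul_of_nonneg_left hmain (by positivity)
      _ ≤ (1 / (2 * Real.pi * a)) * ((C₀ / Real.sqrt (a * r)) * (2 * Real.sqrt t)) := by
          apply mul_le_mul_of_nonneg_left ?_ (by positivity)
          apply mul_le_mul_of_nonneg_left ?_ (by positivity)
          exact mul_le_mul_of_nonneg_left (Real.sqrt_le_sqrt hLt) (by norm_num)
      _ = C₀ * Real.sqrt t / (Real.pi * a * Real.sqrt a) * (Real.sqrt r)⁻¹ := by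
          rw [Real.sqrt_mul ha.le]
          have h1 : Real.sqrt a ≠ 0 := ne_of_gt (Real.sqrt_pos.2 ha)
          have h2 : Real.sqrt r ≠ 0 := ne_of_gt (Real.sqrt_pos.2 hr)
          field_simp
  · simpa using hK

/-- For `a > 0`, `α ∈ (0,2)` and `σ` measurable and bounded, for every `x` and `t ≥ 0`
the function `y ↦ |G(x,y,t)|^α` is integrable over `ℝ²`. -/
theorem integrability_of_wave_kernel_alpha_power
    (a : ℝ) (ha : 0 < a) (α : ℝ) (hα : α ∈ Set.Ioo (0 : ℝ) 2)
    (σ : EuclideanSpace ℝ (Fin 2) → ℝ → ℝ) (C₀ : ℝ)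
    (hσ_meas : Measurable (Function.uncurry σ))
    (hσ_bdd : ∀ x : EuclideanSpace ℝ (Fin 2), ∀ t : ℝ, 0 ≤ t → |σ x t| ≤ C₀)
    (x : EuclideanSpace ℝ (Fin 2)) (t : ℝ) (ht : 0 ≤ t) :
    Integrable (fun y : EuclideanSpace ℝ (Fin 2) => |waveKernel a σ x y t| ^ α) := by
  obtain ⟨hα0, hα2⟩ := hα
  have hC₀ : 0 ≤ C₀ := le_trans (abs_nonneg _) (hσ_bdd x 0 le_rfl)
  have hπ := Real.pi_pos
  set K : ℝ := C₀ * Real.sqrt t / (Real.pi * a * Real.sqrt a) with hKdef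
  have hK0 : 0 ≤ K := by
    apply div_nonneg (mul_nonneg hC₀ (Real.sqrt_nonneg _))
    positivity
  set F₀ : ℝ → ℝ := Set.indicator (Set.Icc (x 0 - a * t) (x 0 + a * t))
    (fun u => K ^ α * |u - x 0| ^ (-(α / 2))) with hF₀def
  set F₁ : ℝ → ℝ := Set.indicator (Set.Icc (x 1 - a * t) (x 1 + a * t))
    (fun _ => (1 : ℝ)) with hF₁def
  -- integrability of the dominating function
  have hF₀int : Integrable F₀ := by
    apply IntegrableOn.integrable_indicator ?_ measurableSet_Icc
    exact ((waveKernel_oneDim_integrable (x 0) (a * t) (α / 2)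
      (by positivity) (by linarith)).const_mul (K ^ α))
  have hF₁int : Integrable F₁ := by
    apply IntegrableOn.integrable_indicator ?_ measurableSet_Icc
    exact integrableOn_const measure_Icc_lt_top.ne
  have hgint : Integrable (fun y : EuclideanSpace ℝ (Fin 2) => F₀ (y 0) * F₁ (y 1)) :=
    waveKernel_prod_integrable F₀ F₁ hF₀int hF₁int
  -- measurability of the target function
  have hmeas : AEStronglyMeasurable
      (fun y : EuclideanSpace ℝ (Fin 2) => |waveKernel a σ x y t| ^ α) volume := by
    have hcont : Continuous (fun s : ℝ => |s| ^ α) :=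
      (Real.continuous_rpow_const hα0.le).comp continuous_abs
    exact (hcont.measurable.comp
      (waveKernel_measurable a ha σ hσ_meas x t)).aestronglyMeasurable
  -- a.e. domination
  have hae : ∀ᵐ y : EuclideanSpace ℝ (Fin 2), y 0 ≠ x 0 := by
    rw [ae_iff]
    have : {y : EuclideanSpace ℝ (Fin 2) | ¬ y 0 ≠ x 0}
        = {y : EuclideanSpace ℝ (Fin 2) | y 0 = x 0} := by
      ext y; simp
    rw [this]
    exact waveKernel_hyperplane_null (x 0)
  apply Integrable.mono' hgint hmeas
  filter_upwards [hae] with y hy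
  have hnn : 0 ≤ |waveKernel a σ x y t| ^ α := Real.rpow_nonneg (abs_nonneg _) α
  rw [Real.norm_eq_abs, abs_of_nonneg hnn]
  have hu : 0 < |y 0 - x 0| := abs_pos.2 (sub_ne_zero.2 hy)
  have hur0 : |y 0 - x 0| ≤ dist x y := waveKernel_coord_le_dist 0 x y
  have hur1 : |y 1 - x 1| ≤ dist x y := waveKernel_coord_le_dist 1 x y
  by_cases hlt : dist x y < a * t
  · have hm0 : y 0 ∈ Set.Icc (x 0 - a * t) (x 0 + a * t) := by
      have h1 : |y 0 - x 0| ≤ a * t := le_of_lt (lt_of_le_of_lt hur0 hlt)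
      obtain ⟨h2, h3⟩ := abs_le.1 h1
      exact ⟨by linarith, by linarith⟩
    have hm1 : y 1 ∈ Set.Icc (x 1 - a * t) (x 1 + a * t) := by
      have h1 : |y 1 - x 1| ≤ a * t := le_of_lt (lt_of_le_of_lt hur1 hlt)
      obtain ⟨h2, h3⟩ := abs_le.1 h1
      exact ⟨by linarith, by linarith⟩
    rw [hF₀def, hF₁def, Set.indicator_of_mem hm0, Set.indicator_of_mem hm1, mul_one]
    have hrpos : 0 < dist x y := lt_of_lt_of_le hu hur0
    have hG := waveKernel_le a ha σ C₀ hσ_bdd x t ht y hrpos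
    have hrnn : (0:ℝ) ≤ dist x y := dist_nonneg
    calc |waveKernel a σ x y t| ^ α
        ≤ (K * (Real.sqrt (dist x y))⁻¹) ^ α :=
          Real.rpow_le_rpow (abs_nonneg _) hG hα0.le
      _ = K ^ α * ((Real.sqrt (dist x y))⁻¹) ^ α :=
          Real.mul_rpow hK0 (inv_nonneg.2 (Real.sqrt_nonneg _))
      _ = K ^ α * (dist x y) ^ (-(α / 2)) := by
          congr 1
          rw [Real.sqrt_eq_rpow, ← Real.rpow_neg hrnn, ← Real.rpow_mul hrnn]
          congr 1
          ring
      _ ≤ K ^ α * |y 0 - x 0| ^ (-(α / 2)) := by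
          apply mul_le_mul_of_nonneg_left ?_ (Real.rpow_nonneg hK0 α)
          exact Real.rpow_le_rpow_of_nonpos hu hur0 (by linarith)
  · rw [waveKernel, if_neg hlt, abs_zero, Real.zero_rpow (ne_of_gt hα0)]
    apply mul_nonneg
    · apply Set.indicator_nonneg
      intro u _
      exact mul_nonneg (Real.rpow_nonneg hK0 α) (Real.rpow_nonneg (abs_nonneg _) _)
    · apply Set.indicator_nonneg
      intro u _
      norm_num
end

section
/- Let a > 0 and let σ : ℝ² × [0,∞) → ℝ satisfy |σ(x,t)| ≤ C₀ for all x ∈ ℝ², t ≥ 0. Then for all x, y ∈ ℝ² and t > 0 with 0 < |x−y| < a t, |G(x,y,t)| ≤ (C₀ / (2π a²)) · ln( a t / |x−y| + √( (a t / |x−y|)² − 1 ) ). -/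
open MeasureTheory Real

/-- Logarithmic bound for the planar wave kernel under a boundedness assumption on `σ`. -/
theorem waveKernel_log_bound
    (a : ℝ) (ha : 0 < a) (σ : EuclideanSpace ℝ (Fin 2) → ℝ → ℝ) (C₀ : ℝ)
    (hσ_bdd : ∀ x : EuclideanSpace ℝ (Fin 2), ∀ t : ℝ, 0 ≤ t → |σ x t| ≤ C₀)
    (x y : EuclideanSpace ℝ (Fin 2)) (t : ℝ) (ht : 0 < t)
    (h0 : 0 < dist x y) (hlt : dist x y < a * t) :
    |waveKernel a σ x y t| ≤
      (C₀ / (2 * Real.pi * a ^ 2)) *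
        Real.log (a * t / dist x y + Real.sqrt ((a * t / dist x y) ^ 2 - 1)) := by
  have hπ : 0 < Real.pi := Real.pi_pos
  set r := dist x y with hr
  have hC₀ : 0 ≤ C₀ := (abs_nonneg _).trans (hσ_bdd x 0 le_rfl)
  have hb : 0 < t - r / a := by
    have : r / a < t := (div_lt_iff₀ ha).mpr (by linarith)
    linarith
  set b := t - r / a with hbdef
  set G : ℝ → ℝ := fun τ =>
    -(C₀ / a) * Real.log (a * (t - τ) + Real.sqrt (a ^ 2 * (t - τ) ^ 2 - r ^ 2)) with hG
  set g : ℝ → ℝ := fun τ => C₀ / Real.sqrt (a ^ 2 * (t - τ) ^ 2 - r ^ 2) with hg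
  -- basic positivity facts
  have hpt : ∀ τ : ℝ, τ ≤ b → r ≤ a * (t - τ) := by
    intro τ hτ
    have h1 : r / a ≤ t - τ := by simp only [hbdef] at hτ; linarith
    have := mul_le_mul_of_nonneg_left h1 ha.le
    calc r = a * (r / a) := by field_simp
      _ ≤ a * (t - τ) := this
  have hppos : ∀ τ : ℝ, τ < b → 0 < a ^ 2 * (t - τ) ^ 2 - r ^ 2 := by
    intro τ hτ
    have h1 : r < a * (t - τ) := by
      have h2 : r / a < t - τ := by simp only [hbdef] at hτ; linarith
      have := mul_lt_mul_of_pos_left h2 ha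
      calc r = a * (r / a) := by field_simp
        _ < a * (t - τ) := this
    nlinarith
  -- derivative
  have hderiv : ∀ τ ∈ Set.Ioo (0:ℝ) b, HasDerivAt G (g τ) τ := by
    intro τ hτ
    have hp : 0 < a ^ 2 * (t - τ) ^ 2 - r ^ 2 := hppos τ hτ.2
    have hspos : 0 < Real.sqrt (a ^ 2 * (t - τ) ^ 2 - r ^ 2) := Real.sqrt_pos.mpr hp
    have hs2 : (Real.sqrt (a ^ 2 * (t - τ) ^ 2 - r ^ 2)) ^ 2 = a ^ 2 * (t - τ) ^ 2 - r ^ 2 :=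
      Real.sq_sqrt hp.le
    have hu : 0 < a * (t - τ) := lt_of_lt_of_le h0 (hpt τ hτ.2.le)
    have h1 : HasDerivAt (fun τ : ℝ => t - τ) (-1) τ := by
      simpa using (hasDerivAt_id τ).const_sub t
    have h2 : HasDerivAt (fun τ : ℝ => a ^ 2 * (t - τ) ^ 2 - r ^ 2)
        (a ^ 2 * (2 * (t - τ) ^ 1 * (-1))) τ := ((h1.pow 2).const_mul (a ^ 2)).sub_const (r ^ 2)
    have h3 : HasDerivAt (fun τ : ℝ => Real.sqrt (a ^ 2 * (t - τ) ^ 2 - r ^ 2))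
        (a ^ 2 * (2 * (t - τ) ^ 1 * (-1)) / (2 * Real.sqrt (a ^ 2 * (t - τ) ^ 2 - r ^ 2))) τ :=
      h2.sqrt hp.ne'
    have h4 : HasDerivAt (fun τ : ℝ => a * (t - τ)) (a * (-1)) τ := h1.const_mul a
    have h5 := (h4.add h3)
    have hne : a * (t - τ) + Real.sqrt (a ^ 2 * (t - τ) ^ 2 - r ^ 2) ≠ 0 := by positivity
    have h6 := (h5.log hne).const_mul (-(C₀ / a))
    refine h6.congr_deriv ?_
    symm
    set s := Real.sqrt (a ^ 2 * (t - τ) ^ 2 - r ^ 2)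
    change C₀ / s = _
    have hne2 : a * (t - τ) + s ≠ 0 := hne
    simp only [Pi.add_apply]
    field_simp
    nlinarith [hs2, hspos, hu]
  -- continuity of G on [0, b]
  have hGcont : ContinuousOn G (Set.Icc 0 b) := by
    apply ContinuousOn.mul continuousOn_const
    apply ContinuousOn.log
    · fun_prop
    · intro τ hτ
      have h1 := hpt τ hτ.2
      have h2 := Real.sqrt_nonneg (a ^ 2 * (t - τ) ^ 2 - r ^ 2)
      have : 0 < a * (t - τ) + Real.sqrt (a ^ 2 * (t - τ) ^ 2 - r ^ 2) := by linarith
      exact this.ne'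
  -- integrability of g
  have hint : IntervalIntegrable g volume 0 b := by
    apply intervalIntegral.intervalIntegrable_deriv_of_nonneg (g := G)
    · rwa [Set.uIcc_of_le hb.le]
    · rw [min_eq_left hb.le, max_eq_right hb.le]; exact hderiv
    · intro τ hτ
      exact div_nonneg hC₀ (Real.sqrt_nonneg _)
  -- FTC
  have hval : (∫ τ in (0:ℝ)..b, g τ) = G b - G 0 :=
    intervalIntegral.integral_eq_sub_of_hasDeriv_right_of_le hb.le hGcont
      (fun τ hτ => ((hderiv τ hτ).hasDerivWithinAt)) hint
  have hvalnn : 0 ≤ (∫ τ in (0:ℝ)..b, g τ) :=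
    intervalIntegral.integral_nonneg hb.le (fun τ _ => div_nonneg hC₀ (Real.sqrt_nonneg _))
  -- bound the main integral
  have hIle : |∫ τ in (0:ℝ)..b, σ y τ / Real.sqrt (a ^ 2 * (t - τ) ^ 2 - r ^ 2)| ≤ G b - G 0 := by
    rw [← hval]
    calc |∫ τ in (0:ℝ)..b, σ y τ / Real.sqrt (a ^ 2 * (t - τ) ^ 2 - r ^ 2)|
        ≤ |∫ τ in (0:ℝ)..b, g τ| := by
          have key : ∀ᵐ τ ∂(volume.restrict (Set.uIoc (0:ℝ) b)),
              ‖σ y τ / Real.sqrt (a ^ 2 * (t - τ) ^ 2 - r ^ 2)‖ ≤ g τ := by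
            apply MeasureTheory.ae_restrict_of_forall_mem measurableSet_uIoc
            intro τ hτ
            rw [Set.uIoc_of_le hb.le] at hτ
            have hτ0 : 0 ≤ τ := hτ.1.le
            simp only [Real.norm_eq_abs, hg, abs_div,
              abs_of_nonneg (Real.sqrt_nonneg (a ^ 2 * (t - τ) ^ 2 - r ^ 2))]
            rcases eq_or_lt_of_le (Real.sqrt_nonneg (a ^ 2 * (t - τ) ^ 2 - r ^ 2)) with h|h
            · rw [← h]; simp
            · exact div_le_div₀ (by linarith [hσ_bdd y τ hτ0, abs_nonneg (σ y τ)])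
                (hσ_bdd y τ hτ0) h le_rfl
          have hn := intervalIntegral.norm_integral_le_of_norm_le hb.le
            ((ae_restrict_iff' measurableSet_Ioc).mp (by rw [← Set.uIoc_of_le hb.le]; exact key)) hint
          rw [Real.norm_eq_abs] at hn
          exact hn.trans (le_abs_self _)
      _ = ∫ τ in (0:ℝ)..b, g τ := abs_of_nonneg hvalnn
  -- compute G b and G 0
  have htb : a * (t - b) = r := by rw [hbdef]; field_simp; ring
  have hGb : G b = -(C₀ / a) * Real.log r := by
    have h2 : a ^ 2 * (t - b) ^ 2 - r ^ 2 = 0 := by nlinarith [htb]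
    simp only [hG, h2, Real.sqrt_zero, htb, add_zero]
  have hq : 0 < a ^ 2 * t ^ 2 - r ^ 2 := by nlinarith
  have hG0 : G 0 = -(C₀ / a) * Real.log (a * t + Real.sqrt (a ^ 2 * t ^ 2 - r ^ 2)) := by
    simp only [hG, sub_zero]
  have hat : 0 < a * t := mul_pos ha ht
  have hX : 0 < a * t + Real.sqrt (a ^ 2 * t ^ 2 - r ^ 2) := by positivity
  have hlogid : Real.log (a * t + Real.sqrt (a ^ 2 * t ^ 2 - r ^ 2)) - Real.log r
      = Real.log (a * t / r + Real.sqrt ((a * t / r) ^ 2 - 1)) := by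
    rw [← Real.log_div hX.ne' h0.ne']
    congr 1
    rw [add_div]
    congr 1
    rw [show (a * t / r) ^ 2 - 1 = (a ^ 2 * t ^ 2 - r ^ 2) / r ^ 2 by field_simp]
    rw [Real.sqrt_div hq.le, Real.sqrt_sq h0.le]
  have hGdiff : G b - G 0 = (C₀ / a) * Real.log (a * t / r + Real.sqrt ((a * t / r) ^ 2 - 1)) := by
    rw [hGb, hG0, ← hlogid]; ring
  -- finish
  rw [waveKernel]
  rw [if_pos hlt]
  rw [abs_mul]
  have h1 : |1 / (2 * Real.pi * a)| = 1 / (2 * Real.pi * a) := abs_of_pos (by positivity)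
  rw [h1]
  calc 1 / (2 * Real.pi * a) * |∫ τ in (0:ℝ)..b, σ y τ / Real.sqrt (a ^ 2 * (t - τ) ^ 2 - r ^ 2)|
      ≤ 1 / (2 * Real.pi * a) * (G b - G 0) := by
        apply mul_le_mul_of_nonneg_left hIle (by positivity)
    _ = (C₀ / (2 * Real.pi * a ^ 2)) *
        Real.log (a * t / r + Real.sqrt ((a * t / r) ^ 2 - 1)) := by
        rw [hGdiff]
        set L := Real.log (a * t / r + Real.sqrt ((a * t / r) ^ 2 - 1))
        ring
end

section
/- Let a > 0, let σ : ℝ² × [0,∞) → ℝ satisfy |σ(x,t)| ≤ C₀ for all x, t, and let R > 0. Then sup_{y ∈ ℝ²} ∫₀^R ∬_{\{x ∈ ℝ² : |x| ≤ R\}} |G(x,y,t)| dx dt < ∞; that is, the L¹-norm of G(·,y,·) over the compact set B(0,R) × [0,R] is bounded uniformly in y. -/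
open MeasureTheory Real ENNReal

lemma hIoc_fin (r : ℝ) (hr : 0 < r) :
    ∫⁻ u in Set.Ioc (0:ℝ) r, (ENNReal.ofReal (Real.sqrt |u|))⁻¹ < ⊤ := by
  have hcong : ∫⁻ u in Set.Ioc (0:ℝ) r, (ENNReal.ofReal (Real.sqrt |u|))⁻¹
      = ∫⁻ u in Set.Ioc (0:ℝ) r, ENNReal.ofReal (u ^ (-(1/2) : ℝ)) := by
    refine setLIntegral_congr_fun measurableSet_Ioc ?_
    intro u hu
    have hu0 : 0 < u := hu.1
    beta_reduce
    rw [abs_of_pos hu0, ← ENNReal.ofReal_inv_of_pos (Real.sqrt_pos.2 hu0)]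
    congr 1
    rw [Real.sqrt_eq_rpow, ← Real.rpow_neg hu0.le]
  rw [hcong]
  have hint : IntegrableOn (fun u : ℝ => u ^ (-(1/2) : ℝ)) (Set.Ioc (0:ℝ) r) := by
    have := intervalIntegral.intervalIntegrable_rpow' (a := 0) (b := r)
      (by norm_num : (-1 : ℝ) < -(1/2))
    rwa [intervalIntegrable_iff, Set.uIoc_of_le hr.le] at this
  calc ∫⁻ u in Set.Ioc (0:ℝ) r, ENNReal.ofReal (u ^ (-(1/2) : ℝ))
      ≤ ∫⁻ u in Set.Ioc (0:ℝ) r, ‖(fun u : ℝ => u ^ (-(1/2):ℝ)) u‖ₑ :=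
        lintegral_ofReal_le_lintegral_enorm _
    _ < ⊤ := hint.2


lemma hIcc_fin (r : ℝ) (hr : 0 < r) :
    ∫⁻ u : ℝ, (Set.Icc (-r) r).indicator
      (fun u => (ENNReal.ofReal (Real.sqrt |u|))⁻¹) u < ⊤ := by
  set e : ℝ → ℝ≥0∞ := fun u => (ENNReal.ofReal (Real.sqrt |u|))⁻¹ with he
  rw [lintegral_indicator measurableSet_Icc]
  have hIco : ∫⁻ u in Set.Ico (0:ℝ) r, e u < ⊤ := by
    have hsub : Set.Ico (0:ℝ) r ⊆ {0} ∪ Set.Ioc (0:ℝ) r := by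
      intro u hu
      rcases eq_or_lt_of_le hu.1 with h | h
      · exact Or.inl (by simp [← h])
      · exact Or.inr ⟨h, hu.2.le⟩
    calc ∫⁻ u in Set.Ico (0:ℝ) r, e u ≤ ∫⁻ u in ({0} ∪ Set.Ioc (0:ℝ) r), e u :=
          lintegral_mono_set hsub
      _ ≤ (∫⁻ u in ({0} : Set ℝ), e u) + ∫⁻ u in Set.Ioc (0:ℝ) r, e u :=
          lintegral_union_le _ _ _
      _ < ⊤ := by
          rw [setLIntegral_measure_zero _ _ Real.volume_singleton]
          simpa using hIoc_fin r hr
  have hneg : ∫⁻ u in Set.Ioc (-r) (0:ℝ), e u = ∫⁻ u in Set.Ico (0:ℝ) r, e u := by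
    have h1 : ∫⁻ u in Set.Ioc (-r) (0:ℝ), e u
        = ∫⁻ u in Set.Ioc (-r) (0:ℝ), e u ∂(Measure.map Neg.neg volume) := by
      rw [Measure.map_neg_eq_self]
    have he_meas : Measurable e := by
      apply Measurable.inv
      exact (continuous_sqrt.comp continuous_abs).measurable.ennreal_ofReal
    rw [h1, setLIntegral_map measurableSet_Ioc he_meas measurable_neg]
    have hpre : (Neg.neg ⁻¹' Set.Ioc (-r) (0:ℝ) : Set ℝ) = Set.Ico (0:ℝ) r := by
      ext u
      simp only [Set.mem_preimage, Set.mem_Ioc, Set.mem_Ico]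
      constructor
      · rintro ⟨h1, h2⟩; constructor <;> linarith
      · rintro ⟨h1, h2⟩; constructor <;> linarith
    rw [hpre]
    refine setLIntegral_congr_fun measurableSet_Ico ?_
    intro u _
    simp [he, abs_neg]
  have hsub2 : Set.Icc (-r) r ⊆ {-r} ∪ (Set.Ioc (-r) 0 ∪ Set.Ioc 0 r) := by
    intro u hu
    rcases eq_or_lt_of_le hu.1 with h | h
    · exact Or.inl (by simp [← h])
    · rcases le_or_gt u 0 with h2 | h2
      · exact Or.inr (Or.inl ⟨h, h2⟩)
      · exact Or.inr (Or.inr ⟨h2, hu.2⟩)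
  calc ∫⁻ u in Set.Icc (-r) r, e u
      ≤ ∫⁻ u in ({-r} ∪ (Set.Ioc (-r) 0 ∪ Set.Ioc 0 r) : Set ℝ), e u :=
        lintegral_mono_set hsub2
    _ ≤ (∫⁻ u in ({-r} : Set ℝ), e u) + ∫⁻ u in (Set.Ioc (-r) 0 ∪ Set.Ioc 0 r : Set ℝ), e u :=
        lintegral_union_le _ _ _
    _ ≤ (∫⁻ u in ({-r} : Set ℝ), e u) + ((∫⁻ u in Set.Ioc (-r) (0:ℝ), e u)
          + ∫⁻ u in Set.Ioc (0:ℝ) r, e u) := by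
        gcongr
        exact lintegral_union_le _ _ _
    _ < ⊤ := by
        rw [setLIntegral_measure_zero _ _ Real.volume_singleton, hneg]
        have h2 := hIoc_fin r hr
        simp only [zero_add]
        exact ENNReal.add_lt_top.2 ⟨hIco, h2⟩


lemma coord_le_norm (z : EuclideanSpace ℝ (Fin 2)) (i : Fin 2) : |z i| ≤ ‖z‖ := by
  rw [EuclideanSpace.norm_eq]
  rw [Real.le_sqrt (abs_nonneg _) (by positivity)]
  rw [sq_abs]
  simpa [Real.norm_eq_abs, sq_abs] using
    Finset.single_le_sum (f := fun j => ‖z j‖ ^ 2) (fun j _ => sq_nonneg _)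
      (Finset.mem_univ i)

lemma ball_fin (r : ℝ) (hr : 0 < r) :
    ∫⁻ z in Metric.closedBall (0 : EuclideanSpace ℝ (Fin 2)) r,
      (ENNReal.ofReal (Real.sqrt ‖z‖))⁻¹ < ⊤ := by
  set f₁ : ℝ → ℝ≥0∞ := fun u =>
    (Set.Icc (-r) r).indicator (fun u => (ENNReal.ofReal (Real.sqrt |u|))⁻¹) u with hf₁
  set f₂ : ℝ → ℝ≥0∞ := fun u => (Set.Icc (-r) r).indicator 1 u with hf₂
  have hf₁m : Measurable f₁ := by
    apply Measurable.indicator _ measurableSet_Icc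
    exact ((continuous_sqrt.comp continuous_abs).measurable.ennreal_ofReal).inv
  have hf₂m : Measurable f₂ := measurable_const.indicator measurableSet_Icc
  have hbound : ∫⁻ z in Metric.closedBall (0 : EuclideanSpace ℝ (Fin 2)) r,
      (ENNReal.ofReal (Real.sqrt ‖z‖))⁻¹
      ≤ ∫⁻ z : EuclideanSpace ℝ (Fin 2), f₁ (z 0) * f₂ (z 1) := by
    refine le_trans (lintegral_mono_ae ?_)
      (setLIntegral_le_lintegral (Metric.closedBall 0 r) _)
    filter_upwards [ae_restrict_mem measurableSet_closedBall] with z hz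
    rw [Metric.mem_closedBall, dist_zero_right] at hz
    have h0 : |z 0| ≤ r := (coord_le_norm z 0).trans hz
    have h1 : |z 1| ≤ r := (coord_le_norm z 1).trans hz
    have hm0 : z 0 ∈ Set.Icc (-r) r := abs_le.mp h0
    have hm1 : z 1 ∈ Set.Icc (-r) r := abs_le.mp h1
    rw [hf₁, hf₂]
    simp only [Set.indicator_of_mem hm0, Set.indicator_of_mem hm1, Pi.one_apply, mul_one]
    apply ENNReal.inv_le_inv.2
    apply ENNReal.ofReal_le_ofReal
    exact Real.sqrt_le_sqrt (coord_le_norm z 0)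
  refine lt_of_le_of_lt hbound ?_
  have hψ := EuclideanSpace.volume_preserving_symm_measurableEquiv_toLp (Fin 2)
  have he2 := MeasureTheory.volume_preserving_finTwoArrow ℝ
  have hmeas : Measurable fun p : Fin 2 → ℝ => f₁ (p 0) * f₂ (p 1) :=
    ((hf₁m.comp (measurable_pi_apply 0)).mul (hf₂m.comp (measurable_pi_apply 1)))
  have step1 : ∫⁻ z : EuclideanSpace ℝ (Fin 2), f₁ (z 0) * f₂ (z 1)
      = ∫⁻ p : Fin 2 → ℝ, f₁ (p 0) * f₂ (p 1) := by
    have := hψ.lintegral_comp hmeas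
    convert this using 1
    rfl
  have step2 : ∫⁻ p : Fin 2 → ℝ, f₁ (p 0) * f₂ (p 1)
      = ∫⁻ q : ℝ × ℝ, f₁ q.1 * f₂ q.2 := by
    have hm2 : Measurable fun q : ℝ × ℝ => f₁ q.1 * f₂ q.2 :=
      (hf₁m.comp measurable_fst).mul (hf₂m.comp measurable_snd)
    have := he2.lintegral_comp hm2
    rw [← this]
    rfl
  rw [step1, step2, (MeasureTheory.Measure.volume_eq_prod ℝ ℝ), lintegral_prod_mul hf₁m.aemeasurable hf₂m.aemeasurable]
  apply ENNReal.mul_lt_top (hIcc_fin r hr)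
  rw [hf₂, lintegral_indicator_one measurableSet_Icc, Real.volume_Icc]
  exact ENNReal.ofReal_lt_top
lemma kernel_ptwise (a : ℝ) (ha : 0 < a) (σ : EuclideanSpace ℝ (Fin 2) → ℝ → ℝ)
    (C₁ : ℝ) (hC₁ : 0 < C₁)
    (hσ : ∀ x : EuclideanSpace ℝ (Fin 2), ∀ t : ℝ, 0 ≤ t → |σ x t| ≤ C₁)
    (R : ℝ) (hR : 0 < R) (t : ℝ) (ht : t ∈ Set.Ioc (0:ℝ) R)
    (x y : EuclideanSpace ℝ (Fin 2)) :
    ENNReal.ofReal |waveKernel a σ x y t| ≤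
      ENNReal.ofReal (C₁ * Real.sqrt R / (Real.pi * a * Real.sqrt a)) *
        (ENNReal.ofReal (Real.sqrt (dist x y)))⁻¹ := by
  set K := C₁ * Real.sqrt R / (Real.pi * a * Real.sqrt a) with hKdef
  have hKpos : 0 < K := by
    apply div_pos (by positivity)
    have := Real.pi_pos
    positivity
  set d := dist x y with hd_def
  have hd0 : 0 ≤ d := dist_nonneg
  rw [waveKernel]
  by_cases h : d < a * t
  swap
  · rw [if_neg h]; simp
  rw [if_pos h]
  by_cases hd : d = 0
  · rw [hd, Real.sqrt_zero, ENNReal.ofReal_zero, ENNReal.inv_zero, ENNReal.mul_top]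
    · exact le_top
    · simp [ENNReal.ofReal_eq_zero, not_le, hKpos]
  have hdpos : 0 < d := lt_of_le_of_ne hd0 (Ne.symm hd)
  set s := t - d / a with hs_def
  have hs : 0 < s := by
    have : d / a < t := (div_lt_iff₀ ha).2 (by linarith [h])
    simpa [hs_def] using sub_pos.2 this
  have hsR : s ≤ R := by
    have h1 : 0 ≤ d / a := div_nonneg hd0 ha.le
    have := ht.2
    simp only [hs_def]; linarith
  set c' := C₁ / Real.sqrt (a * d) with hc'_def
  have hadpos : 0 < a * d := mul_pos ha hdpos
  have hc' : 0 < c' := div_pos hC₁ (Real.sqrt_pos.2 hadpos)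
  set g : ℝ → ℝ := fun τ => c' * (s - τ) ^ (-(1/2) : ℝ) with hg_def
  have hgint : IntervalIntegrable g volume 0 s := by
    have h1 : IntervalIntegrable (fun u : ℝ => u ^ (-(1/2):ℝ)) volume s 0 :=
      intervalIntegral.intervalIntegrable_rpow' (by norm_num)
    have h2 := h1.comp_sub_left s
    simp only [sub_self, sub_zero] at h2
    exact h2.const_mul c'
  have hptwise : ∀ᵐ τ ∂volume.restrict (Set.uIoc 0 s),
      ‖σ y τ / Real.sqrt (a ^ 2 * (t - τ) ^ 2 - d ^ 2)‖ ≤ g τ := by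
    filter_upwards [ae_restrict_mem measurableSet_uIoc] with τ hτ
    rw [Set.uIoc_of_le hs.le] at hτ
    obtain ⟨hτ0, hτs⟩ := hτ
    have hstep : a * (t - τ) = a * (s - τ) + d := by
      rw [hs_def]; field_simp; ring
    have hexp : a ^ 2 * (t - τ) ^ 2 - d ^ 2 = (a * (s - τ)) ^ 2 + 2 * (a * (s - τ)) * d := by
      have h10 : (a * (t - τ)) ^ 2 = (a * (s - τ) + d) ^ 2 := by rw [hstep]
      nlinarith [h10]
    rcases eq_or_lt_of_le hτs with heq | hlt
    · have h11 : s - τ = 0 := by rw [heq]; ring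
      have hzero : a ^ 2 * (t - τ) ^ 2 - d ^ 2 = 0 := by rw [hexp, h11]; ring
      simp only [hzero, Real.sqrt_zero, _root_.div_zero, norm_zero]
      simp only [hg_def, h11]
      rw [Real.zero_rpow (by norm_num), mul_zero]
    · have h1 : 0 < s - τ := sub_pos.2 hlt
      have hD : a * d * (s - τ) ≤ a ^ 2 * (t - τ) ^ 2 - d ^ 2 := by
        rw [hexp]
        nlinarith [sq_nonneg (a * (s - τ)), mul_nonneg (mul_nonneg ha.le h1.le) hd0]
      have h2 : Real.sqrt (a * d) * Real.sqrt (s - τ)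
          ≤ Real.sqrt (a ^ 2 * (t - τ) ^ 2 - d ^ 2) := by
        rw [← Real.sqrt_mul hadpos.le]
        exact Real.sqrt_le_sqrt hD
      have h3 : 0 < Real.sqrt (a * d) * Real.sqrt (s - τ) := by positivity
      have h4 : ‖σ y τ / Real.sqrt (a ^ 2 * (t - τ) ^ 2 - d ^ 2)‖
          = |σ y τ| / Real.sqrt (a ^ 2 * (t - τ) ^ 2 - d ^ 2) := by
        rw [Real.norm_eq_abs, abs_div, abs_of_nonneg (Real.sqrt_nonneg _)]
      rw [h4]
      have h5 : |σ y τ| / Real.sqrt (a ^ 2 * (t - τ) ^ 2 - d ^ 2)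
          ≤ C₁ / (Real.sqrt (a * d) * Real.sqrt (s - τ)) :=
        div_le_div₀ hC₁.le (hσ y τ hτ0.le) h3 h2
      refine h5.trans (le_of_eq ?_)
      show C₁ / (Real.sqrt (a * d) * Real.sqrt (s - τ))
        = c' * (s - τ) ^ (-(1/2) : ℝ)
      rw [hc'_def]
      rw [Real.rpow_neg h1.le, ← Real.sqrt_eq_rpow]
      have hsa : Real.sqrt (a * d) ≠ 0 := ne_of_gt (Real.sqrt_pos.2 hadpos)
      have hst : Real.sqrt (s - τ) ≠ 0 := ne_of_gt (Real.sqrt_pos.2 h1)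
      field_simp
  have hJ := intervalIntegral.norm_integral_le_of_norm_le
    (f := fun τ => σ y τ / Real.sqrt (a ^ 2 * (t - τ) ^ 2 - d ^ 2))
    (μ := volume) (a := 0) (b := s) hs.le
      (by rw [Set.uIoc_of_le hs.le] at hptwise; exact (ae_restrict_iff' measurableSet_Ioc).1 hptwise) hgint
  have hgval : ∫ τ in (0:ℝ)..s, g τ = c' * (2 * Real.sqrt s) := by
    rw [hg_def]
    rw [intervalIntegral.integral_const_mul]
    congr 1
    have h6 : ∫ τ in (0:ℝ)..s, (s - τ) ^ (-(1/2):ℝ)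
        = ∫ u in (s-s)..(s-0), u ^ (-(1/2):ℝ) :=
      intervalIntegral.integral_comp_sub_left (fun u => u ^ (-(1/2):ℝ)) s
    rw [h6]
    simp only [sub_self, sub_zero]
    rw [integral_rpow (Or.inl (by norm_num))]
    rw [Real.zero_rpow (by norm_num)]
    rw [Real.sqrt_eq_rpow]
    norm_num
    ring_nf
  have hJ2 : |∫ τ in (0:ℝ)..s, σ y τ / Real.sqrt (a ^ 2 * (t - τ) ^ 2 - d ^ 2)|
      ≤ c' * (2 * Real.sqrt s) := by
    have := hJ
    rw [hgval] at this
    exact le_trans (le_of_eq (Real.norm_eq_abs _).symm) this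
  have hfinal : |1 / (2 * Real.pi * a) *
      ∫ τ in (0:ℝ)..s, σ y τ / Real.sqrt (a ^ 2 * (t - τ) ^ 2 - d ^ 2)| ≤ K / Real.sqrt d := by
    rw [abs_mul]
    have hpi := Real.pi_pos
    have habs : |1 / (2 * Real.pi * a)| = 1 / (2 * Real.pi * a) :=
      abs_of_pos (by positivity)
    rw [habs]
    have hb1 : 1 / (2 * Real.pi * a) *
        |∫ τ in (0:ℝ)..s, σ y τ / Real.sqrt (a ^ 2 * (t - τ) ^ 2 - d ^ 2)|
        ≤ 1 / (2 * Real.pi * a) * (c' * (2 * Real.sqrt s)) := by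
      apply mul_le_mul_of_nonneg_left hJ2 (by positivity)
    refine hb1.trans ?_
    have hss : Real.sqrt s ≤ Real.sqrt R := Real.sqrt_le_sqrt hsR
    have hb2 : 1 / (2 * Real.pi * a) * (c' * (2 * Real.sqrt s))
        ≤ 1 / (2 * Real.pi * a) * (c' * (2 * Real.sqrt R)) := by
      apply mul_le_mul_of_nonneg_left _ (by positivity)
      apply mul_le_mul_of_nonneg_left _ hc'.le
      linarith
    refine hb2.trans (le_of_eq ?_)
    rw [hKdef, hc'_def, Real.sqrt_mul ha.le]
    have h7 : Real.sqrt a ≠ 0 := ne_of_gt (Real.sqrt_pos.2 ha)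
    have h8 : Real.sqrt d ≠ 0 := ne_of_gt (Real.sqrt_pos.2 hdpos)
    field_simp
  calc ENNReal.ofReal |1 / (2 * Real.pi * a) *
        ∫ τ in (0:ℝ)..s, σ y τ / Real.sqrt (a ^ 2 * (t - τ) ^ 2 - d ^ 2)|
      ≤ ENNReal.ofReal (K / Real.sqrt d) := ENNReal.ofReal_le_ofReal hfinal
    _ = ENNReal.ofReal K * (ENNReal.ofReal (Real.sqrt d))⁻¹ := by
        rw [ENNReal.ofReal_div_of_pos (Real.sqrt_pos.2 hdpos), div_eq_mul_inv]

/-- The `L¹` norm of `G(·,y,·)` over `B(0,R) × [0,R]` is bounded uniformly in `y`. -/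
theorem waveKernel_L1_bound_uniform
    (a : ℝ) (ha : 0 < a) (σ : EuclideanSpace ℝ (Fin 2) → ℝ → ℝ) (C₀ : ℝ)
    (hσ_bdd : ∀ x : EuclideanSpace ℝ (Fin 2), ∀ t : ℝ, 0 ≤ t → |σ x t| ≤ C₀)
    (R : ℝ) (hR : 0 < R) :
    (⨆ y : EuclideanSpace ℝ (Fin 2),
      ∫⁻ t in Set.Ioc (0 : ℝ) R,
        ∫⁻ x in Metric.closedBall (0 : EuclideanSpace ℝ (Fin 2)) R,
          ENNReal.ofReal |waveKernel a σ x y t|) < ⊤ := by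
  have hC₀ : 0 ≤ C₀ := le_trans (abs_nonneg _) (hσ_bdd 0 0 le_rfl)
  set C₁ : ℝ := C₀ + 1 with hC₁def
  have hC₁ : 0 < C₁ := by linarith
  have hσ' : ∀ x : EuclideanSpace ℝ (Fin 2), ∀ t : ℝ, 0 ≤ t → |σ x t| ≤ C₁ :=
    fun x t ht => (hσ_bdd x t ht).trans (by linarith)
  set K : ℝ := C₁ * Real.sqrt R / (Real.pi * a * Real.sqrt a) with hKdef
  set KE : ℝ≥0∞ := ENNReal.ofReal K with hKE
  have h2R : 0 < 2 * R := by linarith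
  set B₁ : ℝ≥0∞ := KE * (ENNReal.ofReal (Real.sqrt (2 * R)))⁻¹ with hB₁
  have hB₁top : B₁ ≠ ⊤ := by
    apply ENNReal.mul_ne_top ENNReal.ofReal_ne_top
    rw [ENNReal.inv_ne_top]
    simp only [ne_eq, ENNReal.ofReal_eq_zero, not_le]
    exact Real.sqrt_pos.2 h2R
  set Mfin : ℝ≥0∞ := ∫⁻ z in Metric.closedBall (0 : EuclideanSpace ℝ (Fin 2)) (2 * R),
    (ENNReal.ofReal (Real.sqrt ‖z‖))⁻¹ with hMfin
  have hMfintop : Mfin < ⊤ := ball_fin (2 * R) h2R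
  set Bnd : ℝ≥0∞ := B₁ * volume (Metric.closedBall (0 : EuclideanSpace ℝ (Fin 2)) R)
    + KE * Mfin with hBnd
  have hBndtop : Bnd < ⊤ := by
    rw [hBnd]
    apply ENNReal.add_lt_top.2
    constructor
    · exact ENNReal.mul_lt_top hB₁top.lt_top measure_closedBall_lt_top
    · exact ENNReal.mul_lt_top ENNReal.ofReal_lt_top hMfintop
  have key : ∀ y : EuclideanSpace ℝ (Fin 2), ∀ t ∈ Set.Ioc (0:ℝ) R,
      ∫⁻ x in Metric.closedBall (0 : EuclideanSpace ℝ (Fin 2)) R,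
        ENNReal.ofReal |waveKernel a σ x y t| ≤ Bnd := by
    intro y t ht
    set ind : EuclideanSpace ℝ (Fin 2) → ℝ≥0∞ := fun x =>
      (Metric.closedBall y (2 * R)).indicator
        (fun x => KE * (ENNReal.ofReal (Real.sqrt (dist x y)))⁻¹) x with hind
    have step1 : ∫⁻ x in Metric.closedBall (0 : EuclideanSpace ℝ (Fin 2)) R,
        ENNReal.ofReal |waveKernel a σ x y t|
        ≤ ∫⁻ x in Metric.closedBall (0 : EuclideanSpace ℝ (Fin 2)) R, (B₁ + ind x) := by
      apply lintegral_mono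
      intro x
      refine (kernel_ptwise a ha σ C₁ hC₁ hσ' R hR t ht x y).trans ?_
      by_cases hx : x ∈ Metric.closedBall y (2 * R)
      · rw [hind]
        simp only [Set.indicator_of_mem hx]
        exact le_add_self
      · have hfar : 2 * R < dist x y := by
          by_contra hc
          exact hx (Metric.mem_closedBall.2 (not_lt.1 hc))
        rw [hind]
        simp only [Set.indicator_of_notMem hx, add_zero]
        rw [hB₁]
        apply mul_le_mul_right
        apply ENNReal.inv_le_inv.2
        exact ENNReal.ofReal_le_ofReal (Real.sqrt_le_sqrt hfar.le)
    have hindm : Measurable ind := by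
      apply Measurable.indicator _ measurableSet_closedBall
      apply Measurable.const_mul
      apply Measurable.inv
      apply Measurable.ennreal_ofReal
      exact (continuous_sqrt.comp (continuous_id.dist continuous_const)).measurable
    have step2 : ∫⁻ x in Metric.closedBall (0 : EuclideanSpace ℝ (Fin 2)) R, (B₁ + ind x)
        = B₁ * volume (Metric.closedBall (0 : EuclideanSpace ℝ (Fin 2)) R)
          + ∫⁻ x in Metric.closedBall (0 : EuclideanSpace ℝ (Fin 2)) R, ind x := by
      rw [lintegral_add_left measurable_const, setLIntegral_const]
    have step3 : ∫⁻ x in Metric.closedBall (0 : EuclideanSpace ℝ (Fin 2)) R, ind x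
        ≤ KE * Mfin := by
      refine le_trans (setLIntegral_le_lintegral _ _) ?_
      set hfun : EuclideanSpace ℝ (Fin 2) → ℝ≥0∞ := fun z =>
        (Metric.closedBall (0 : EuclideanSpace ℝ (Fin 2)) (2 * R)).indicator
          (fun z => KE * (ENNReal.ofReal (Real.sqrt ‖z‖))⁻¹) z with hhfun
      have hcomp : ∀ x, ind x = hfun (x - y) := by
        intro x
        rw [hind, hhfun]
        by_cases hx : x ∈ Metric.closedBall y (2 * R)
        · have hx2 : x - y ∈ Metric.closedBall (0 : EuclideanSpace ℝ (Fin 2)) (2 * R) := by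
            rw [Metric.mem_closedBall, dist_zero_right, ← dist_eq_norm]
            exact Metric.mem_closedBall.1 hx
          simp only [Set.indicator_of_mem hx, Set.indicator_of_mem hx2, dist_eq_norm]
        · have hx2 : x - y ∉ Metric.closedBall (0 : EuclideanSpace ℝ (Fin 2)) (2 * R) := by
            rw [Metric.mem_closedBall, dist_zero_right, ← dist_eq_norm]
            exact fun hc => hx (Metric.mem_closedBall.2 hc)
          simp only [Set.indicator_of_notMem hx, Set.indicator_of_notMem hx2]
      calc ∫⁻ x, ind x = ∫⁻ x, hfun (x - y) := by
            apply lintegral_congr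
            exact hcomp
        _ = ∫⁻ z, hfun z := lintegral_sub_right_eq_self hfun y
        _ = ∫⁻ z in Metric.closedBall (0 : EuclideanSpace ℝ (Fin 2)) (2 * R),
              KE * (ENNReal.ofReal (Real.sqrt ‖z‖))⁻¹ := by
            rw [hhfun, lintegral_indicator measurableSet_closedBall]
        _ = KE * Mfin := by
            rw [hMfin, lintegral_const_mul' _ _ ENNReal.ofReal_ne_top]
        _ ≤ KE * Mfin := le_rfl
    calc ∫⁻ x in Metric.closedBall (0 : EuclideanSpace ℝ (Fin 2)) R,
          ENNReal.ofReal |waveKernel a σ x y t|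
        ≤ ∫⁻ x in Metric.closedBall (0 : EuclideanSpace ℝ (Fin 2)) R, (B₁ + ind x) := step1
      _ = B₁ * volume (Metric.closedBall (0 : EuclideanSpace ℝ (Fin 2)) R)
          + ∫⁻ x in Metric.closedBall (0 : EuclideanSpace ℝ (Fin 2)) R, ind x := step2
      _ ≤ Bnd := by rw [hBnd]; exact add_le_add_right step3 _
  have hy : ∀ y : EuclideanSpace ℝ (Fin 2),
      (∫⁻ t in Set.Ioc (0 : ℝ) R,
        ∫⁻ x in Metric.closedBall (0 : EuclideanSpace ℝ (Fin 2)) R,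
          ENNReal.ofReal |waveKernel a σ x y t|) ≤ Bnd * ENNReal.ofReal R := by
    intro y
    calc (∫⁻ t in Set.Ioc (0 : ℝ) R,
          ∫⁻ x in Metric.closedBall (0 : EuclideanSpace ℝ (Fin 2)) R,
            ENNReal.ofReal |waveKernel a σ x y t|)
        ≤ ∫⁻ _t in Set.Ioc (0 : ℝ) R, Bnd := by
          apply lintegral_mono_ae
          filter_upwards [ae_restrict_mem measurableSet_Ioc] with t ht
          exact key y t ht
      _ = Bnd * ENNReal.ofReal R := by
          rw [setLIntegral_const, Real.volume_Ioc, sub_zero]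
  exact lt_of_le_of_lt (iSup_le hy) (ENNReal.mul_lt_top hBndtop ENNReal.ofReal_lt_top)
end

section
/- Let a > 0 and 0 < r < a t₁ < a t₂. Then ∫_{t₁}^{t₂} ds / √(a² s² − r²) ≤ √( 2 (t₂ − t₁) / (a r) ). -/
open Real

lemma sqrt_add_le' (x y : ℝ) (hx : 0 ≤ x) (hy : 0 ≤ y) :
    Real.sqrt (x + y) ≤ Real.sqrt x + Real.sqrt y := by
  rw [show x + y = Real.sqrt x ^ 2 + Real.sqrt y ^ 2 by rw [Real.sq_sqrt hx, Real.sq_sqrt hy]]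
  nlinarith [Real.sqrt_nonneg x, Real.sqrt_nonneg y,
    Real.sq_sqrt (by positivity : (0:ℝ) ≤ Real.sqrt x ^ 2 + Real.sqrt y ^ 2),
    Real.sqrt_nonneg (Real.sqrt x ^ 2 + Real.sqrt y ^ 2)]

/-- For `a > 0` and `0 < r < a t₁ < a t₂`:
`∫_{t₁}^{t₂} ds/√(a²s² - r²) ≤ √(2(t₂ - t₁)/(a r))`. -/
theorem integral_inv_sqrt_bound_away_from_singularity
    (a t₁ t₂ r : ℝ) (ha : 0 < a) (hr : 0 < r)
    (h₁ : r < a * t₁) (h₂ : a * t₁ < a * t₂) :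
    ∫ s in t₁..t₂, 1 / Real.sqrt (a ^ 2 * s ^ 2 - r ^ 2)
      ≤ Real.sqrt (2 * (t₂ - t₁) / (a * r)) := by
  have ht : t₁ < t₂ := lt_of_mul_lt_mul_left h₂ ha.le
  have ht₁ : 0 < t₁ := by nlinarith
  -- pointwise positivity on [t₁, t₂]
  have hpos : ∀ s ∈ Set.Icc t₁ t₂, 0 < a ^ 2 * s ^ 2 - r ^ 2 := by
    intro s hs
    have h1 : r < a * s := lt_of_lt_of_le h₁ (by nlinarith [hs.1])
    nlinarith
  have hpos2 : ∀ s ∈ Set.Icc t₁ t₂, 0 < 2 * r * (a * s - r) := by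
    intro s hs
    have h1 : r < a * s := lt_of_lt_of_le h₁ (by nlinarith [hs.1])
    nlinarith
  -- integrability of both integrands
  have hcont1 : ContinuousOn (fun s => 1 / Real.sqrt (a ^ 2 * s ^ 2 - r ^ 2)) (Set.Icc t₁ t₂) := by
    apply ContinuousOn.div continuousOn_const
    · exact (continuous_sqrt.comp (by continuity)).continuousOn
    · intro s hs
      exact (Real.sqrt_pos.2 (hpos s hs)).ne'
  have hcont2 : ContinuousOn (fun s => 1 / Real.sqrt (2 * r * (a * s - r))) (Set.Icc t₁ t₂) := by
    apply ContinuousOn.div continuousOn_const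
    · exact (continuous_sqrt.comp (by continuity)).continuousOn
    · intro s hs
      exact (Real.sqrt_pos.2 (hpos2 s hs)).ne'
  have hint1 := hcont1.intervalIntegrable_of_Icc (μ := MeasureTheory.volume) ht.le
  have hint2 := hcont2.intervalIntegrable_of_Icc (μ := MeasureTheory.volume) ht.le
  -- step 1: pointwise bound
  have step1 : ∫ s in t₁..t₂, 1 / Real.sqrt (a ^ 2 * s ^ 2 - r ^ 2)
      ≤ ∫ s in t₁..t₂, 1 / Real.sqrt (2 * r * (a * s - r)) := by
    apply intervalIntegral.integral_mono_on ht.le hint1 hint2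
    intro s hs
    have h1 : r < a * s := lt_of_lt_of_le h₁ (by nlinarith [hs.1])
    apply one_div_le_one_div_of_le (Real.sqrt_pos.2 (hpos2 s hs))
    apply Real.sqrt_le_sqrt
    nlinarith
  -- step 2: compute the second integral
  have hsr : 0 < Real.sqrt (2 * r) := Real.sqrt_pos.2 (by positivity)
  set c : ℝ := 2 / (a * Real.sqrt (2 * r)) with hc
  have step2 : ∫ s in t₁..t₂, 1 / Real.sqrt (2 * r * (a * s - r))
      = c * Real.sqrt (a * t₂ - r) - c * Real.sqrt (a * t₁ - r) := by
    apply intervalIntegral.integral_eq_sub_of_hasDerivAt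
    · intro s hs
      rw [Set.uIcc_of_le ht.le] at hs
      have h1 : r < a * s := lt_of_lt_of_le h₁ (by nlinarith [hs.1])
      have hlin : HasDerivAt (fun s : ℝ => a * s - r) a s := by
        simpa using ((hasDerivAt_id s).const_mul a).sub_const r
      have hds : HasDerivAt (fun s => Real.sqrt (a * s - r)) (1 / (2 * Real.sqrt (a * s - r)) * a) s :=
        (Real.hasDerivAt_sqrt (by nlinarith)).comp s hlin
      have := hds.const_mul c
      convert this using 1
      · rfl
      have hs1 : 0 < Real.sqrt (a * s - r) := Real.sqrt_pos.2 (by nlinarith)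
      rw [Real.sqrt_mul (by positivity) (a * s - r)]
      rw [hc]
      field_simp [hc]
    · exact hint2
  -- step 3: bound the difference of sqrts
  have hc0 : 0 < c := by positivity
  have step3 : c * Real.sqrt (a * t₂ - r) - c * Real.sqrt (a * t₁ - r)
      ≤ c * Real.sqrt (a * (t₂ - t₁)) := by
    have : Real.sqrt (a * t₂ - r) ≤ Real.sqrt (a * t₁ - r) + Real.sqrt (a * (t₂ - t₁)) := by
      have := sqrt_add_le' (a * t₁ - r) (a * (t₂ - t₁)) (by nlinarith) (by nlinarith)
      calc Real.sqrt (a * t₂ - r) = Real.sqrt ((a * t₁ - r) + a * (t₂ - t₁)) := by ring_nf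
        _ ≤ _ := this
    nlinarith
  -- step 4: identify with RHS
  have step4 : c * Real.sqrt (a * (t₂ - t₁)) = Real.sqrt (2 * (t₂ - t₁) / (a * r)) := by
    rw [← Real.sqrt_sq hc0.le, ← Real.sqrt_mul (sq_nonneg c)]
    congr 1
    rw [hc, div_pow, mul_pow, Real.sq_sqrt (by positivity : (0:ℝ) ≤ 2 * r)]
    field_simp
  calc _ ≤ _ := step1
    _ = _ := step2
    _ ≤ _ := step3
    _ = _ := step4
end

section
/- Let a > 0, T > 0, and let σ : ℝ² × [0,∞) → ℝ satisfy |σ(x,t)| ≤ C₀ for all x, t, and the Hölder condition |σ(x,t) − σ(x,s)| ≤ |t−s|^γ for all x ∈ ℝ² and t,s ≥ 0, for some γ ∈ (0,1]. Then there is a constant C (depending only on a, C₀, γ, T) such that for all x, y ∈ ℝ² and 0 ≤ t₁ ≤ t₂ ≤ T with 0 < |x−y| < a t₁: |G(x,y,t₁) − G(x,y,t₂)| ≤ C ( (t₂ − t₁)^γ + √(t₂ − t₁) ) / √(|x−y|). -/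
open MeasureTheory Real

lemma holder_continuousOn (f : ℝ → ℝ) (γ : ℝ) (hγ : 0 < γ)
    (h : ∀ t s : ℝ, 0 ≤ t → 0 ≤ s → |f t - f s| ≤ |t - s| ^ γ) :
    ContinuousOn f (Set.Ici 0) := by
  intro s hs
  have h1 : Filter.Tendsto (fun t : ℝ => |t - s| ^ γ) (nhdsWithin s (Set.Ici 0)) (nhds 0) := by
    have h0 : Filter.Tendsto (fun t : ℝ => |t - s| ^ γ) (nhds s) (nhds (|s - s| ^ γ)) := by
      apply Filter.Tendsto.rpow_const
      · exact (continuous_abs.comp (continuous_id.sub continuous_const)).tendsto s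
      · right; exact hγ.le
    have : |s - s| ^ γ = 0 := by
      simp [Real.zero_rpow hγ.ne']
    rw [this] at h0
    exact h0.mono_left nhdsWithin_le_nhds
  have h2 : Filter.Tendsto (fun t => |f t - f s|) (nhdsWithin s (Set.Ici 0)) (nhds 0) := by
    apply squeeze_zero' (Filter.Eventually.of_forall (fun t => abs_nonneg _)) ?_ h1
    filter_upwards [self_mem_nhdsWithin] with t ht
    exact h t s ht hs
  rw [ContinuousWithinAt, tendsto_iff_dist_tendsto_zero]
  simpa [Real.dist_eq] using h2

lemma sqrt_sub_sqrt_le (A B : ℝ) (hB : 0 ≤ B) (hBA : B ≤ A) :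
    Real.sqrt A - Real.sqrt B ≤ Real.sqrt (A - B) := by
  have hAB : 0 ≤ A - B := sub_nonneg.2 hBA
  have h1 : A ≤ (Real.sqrt B + Real.sqrt (A - B)) ^ 2 := by
    nlinarith [Real.sq_sqrt hB, Real.sq_sqrt hAB, Real.sqrt_nonneg B, Real.sqrt_nonneg (A - B),
      mul_nonneg (Real.sqrt_nonneg B) (Real.sqrt_nonneg (A - B))]
  have h2 := Real.sqrt_le_sqrt h1
  rw [Real.sqrt_sq (by positivity)] at h2
  linarith

lemma integral_shifted_rpow (b c d : ℝ) :
    ∫ u in c..d, (u - b) ^ (-(1/2) : ℝ) = 2 * Real.sqrt (d - b) - 2 * Real.sqrt (c - b) := by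
  rw [intervalIntegral.integral_comp_sub_right (fun v => v ^ (-(1/2) : ℝ)) b]
  rw [integral_rpow (Or.inl (by norm_num))]
  rw [Real.sqrt_eq_rpow, Real.sqrt_eq_rpow]
  norm_num
  ring

lemma intervalIntegrable_shifted_rpow (b c d : ℝ) :
    IntervalIntegrable (fun u => (u - b) ^ (-(1/2) : ℝ)) volume c d := by
  simpa using (intervalIntegral.intervalIntegrable_rpow' (r := (-(1/2) : ℝ)) (by norm_num)
    (a := c - b) (b := d - b)).comp_sub_right b

lemma wk_aux (a r : ℝ) (ha : 0 < a) (hr : 0 < r) (c d : ℝ)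
    (hbc : r / a ≤ c) (hcd : c ≤ d) (g : ℝ → ℝ) (M : ℝ)
    (hgc : ContinuousOn g (Set.Icc c d))
    (hgM : ∀ u ∈ Set.Icc c d, |g u| ≤ M) :
    IntervalIntegrable (fun u => g u / Real.sqrt (a ^ 2 * u ^ 2 - r ^ 2)) volume c d ∧
    |∫ u in c..d, g u / Real.sqrt (a ^ 2 * u ^ 2 - r ^ 2)| ≤
      M / Real.sqrt (2 * r * a) * (2 * Real.sqrt (d - r / a) - 2 * Real.sqrt (c - r / a)) := by
  set b := r / a with hbdef
  have hb_pos : 0 < b := div_pos hr ha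
  have hab : a * b = r := by rw [hbdef]; field_simp
  have hM : 0 ≤ M := le_trans (abs_nonneg _) (hgM c ⟨le_refl c, hcd⟩)
  have hS : 0 < Real.sqrt (2 * r * a) := Real.sqrt_pos.2 (by positivity)
  have hpos : ∀ u ∈ Set.Ioc c d, 0 < a ^ 2 * u ^ 2 - r ^ 2 := by
    intro u hu
    have hbu : b < u := lt_of_le_of_lt hbc hu.1
    have hau : r < a * u := by
      calc r = a * b := hab.symm
        _ < a * u := by exact mul_lt_mul_of_pos_left hbu ha
    nlinarith [hau, hr]
  have hbound : ∀ u ∈ Set.Ioc c d,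
      |g u / Real.sqrt (a ^ 2 * u ^ 2 - r ^ 2)| ≤
        M / Real.sqrt (2 * r * a) * (u - b) ^ (-(1/2) : ℝ) := by
    intro u hu
    have hbu : b < u := lt_of_le_of_lt hbc hu.1
    have hub : 0 < u - b := sub_pos.2 hbu
    have hlow : 2 * r * a * (u - b) ≤ a ^ 2 * u ^ 2 - r ^ 2 := by
      nlinarith [sq_nonneg (a * u - r), hab]
    have hd0 : 0 < Real.sqrt (2 * r * a * (u - b)) := Real.sqrt_pos.2 (by positivity)
    have hd1 : Real.sqrt (2 * r * a * (u - b)) ≤ Real.sqrt (a ^ 2 * u ^ 2 - r ^ 2) :=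
      Real.sqrt_le_sqrt hlow
    have hgu : |g u| ≤ M := hgM u ⟨hu.1.le, hu.2⟩
    have h1 : |g u / Real.sqrt (a ^ 2 * u ^ 2 - r ^ 2)| ≤
        M / Real.sqrt (2 * r * a * (u - b)) := by
      rw [abs_div, abs_of_nonneg (Real.sqrt_nonneg _)]
      exact div_le_div₀ hM hgu hd0 hd1
    have h2 : M / Real.sqrt (2 * r * a * (u - b)) =
        M / Real.sqrt (2 * r * a) * (u - b) ^ (-(1/2) : ℝ) := by
      rw [Real.rpow_neg hub.le, ← Real.sqrt_eq_rpow,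
        Real.sqrt_mul (by positivity) (u - b), ← div_div,
        div_eq_mul_inv (M / Real.sqrt (2 * r * a))]
    rw [h2] at h1
    exact h1
  have hD : IntervalIntegrable
      (fun u => M / Real.sqrt (2 * r * a) * (u - b) ^ (-(1/2) : ℝ)) volume c d :=
    (intervalIntegrable_shifted_rpow b c d).const_mul _
  have hcontD : ContinuousOn (fun u => g u / Real.sqrt (a ^ 2 * u ^ 2 - r ^ 2))
      (Set.Ioc c d) := by
    apply ContinuousOn.div (hgc.mono Set.Ioc_subset_Icc_self)
    · exact (Real.continuous_sqrt.comp (by continuity)).continuousOn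
    · intro u hu
      exact (Real.sqrt_pos.2 (hpos u hu)).ne'
  have hmeas := hcontD.aestronglyMeasurable (μ := volume) measurableSet_Ioc
  have hIntOn : IntegrableOn (fun u => g u / Real.sqrt (a ^ 2 * u ^ 2 - r ^ 2))
      (Set.Ioc c d) volume := by
    apply Integrable.mono' ((intervalIntegrable_iff_integrableOn_Ioc_of_le hcd).mp hD) hmeas
    rw [ae_restrict_iff' measurableSet_Ioc]
    exact Filter.Eventually.of_forall (fun u hu => hbound u hu)
  have hII : IntervalIntegrable (fun u => g u / Real.sqrt (a ^ 2 * u ^ 2 - r ^ 2)) volume c d :=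
    (intervalIntegrable_iff_integrableOn_Ioc_of_le hcd).mpr hIntOn
  refine ⟨hII, ?_⟩
  have hae : ∀ᵐ t ∂(volume.restrict (Set.uIoc c d)),
      ‖g t / Real.sqrt (a ^ 2 * t ^ 2 - r ^ 2)‖ ≤
        M / Real.sqrt (2 * r * a) * (t - b) ^ (-(1/2) : ℝ) := by
    rw [Set.uIoc_of_le hcd, ae_restrict_iff' measurableSet_Ioc]
    exact Filter.Eventually.of_forall (fun u hu => hbound u hu)
  have hb1 := (intervalIntegral.norm_integral_le_of_norm_le hcd
    ((ae_restrict_iff' measurableSet_Ioc).mp (by rwa [Set.uIoc_of_le hcd] at hae)) hD).trans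
    (le_abs_self _)
  calc |∫ u in c..d, g u / Real.sqrt (a ^ 2 * u ^ 2 - r ^ 2)|
      ≤ |∫ u in c..d, M / Real.sqrt (2 * r * a) * (u - b) ^ (-(1/2) : ℝ)| := hb1
    _ = |M / Real.sqrt (2 * r * a) * (2 * Real.sqrt (d - b) - 2 * Real.sqrt (c - b))| := by
        rw [intervalIntegral.integral_const_mul, integral_shifted_rpow]
    _ = M / Real.sqrt (2 * r * a) * (2 * Real.sqrt (d - b) - 2 * Real.sqrt (c - b)) := by
        apply abs_of_nonneg
        apply mul_nonneg (by positivity)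
        have := Real.sqrt_le_sqrt (sub_le_sub_right hcd b)
        linarith

/-- Time increment bound for the planar wave kernel in the regime `0 < |x-y| < a t₁`:
`|G(x,y,t₁) - G(x,y,t₂)| ≤ C ((t₂-t₁)^γ + √(t₂-t₁))/√|x-y|`. -/
theorem waveKernel_time_increment_bound_inside
    (a T : ℝ) (ha : 0 < a) (hT : 0 < T)
    (σ : EuclideanSpace ℝ (Fin 2) → ℝ → ℝ) (C₀ : ℝ) (γ : ℝ) (hγ : γ ∈ Set.Ioc (0 : ℝ) 1)
    (hσ_bdd : ∀ x : EuclideanSpace ℝ (Fin 2), ∀ t : ℝ, 0 ≤ t → |σ x t| ≤ C₀)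
    (hσ_hold : ∀ x : EuclideanSpace ℝ (Fin 2), ∀ t s : ℝ, 0 ≤ t → 0 ≤ s →
      |σ x t - σ x s| ≤ |t - s| ^ γ) :
    ∃ C : ℝ, 0 < C ∧
      ∀ (x y : EuclideanSpace ℝ (Fin 2)) (t₁ t₂ : ℝ),
        0 ≤ t₁ → t₁ ≤ t₂ → t₂ ≤ T → 0 < dist x y → dist x y < a * t₁ →
        |waveKernel a σ x y t₁ - waveKernel a σ x y t₂| ≤
          C * ((t₂ - t₁) ^ γ + Real.sqrt (t₂ - t₁)) / Real.sqrt (dist x y) := by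
  obtain ⟨hγ0, hγ1⟩ := hγ
  have hC₀ : 0 ≤ C₀ := le_trans (abs_nonneg _) (hσ_bdd 0 0 le_rfl)
  have hπ : 0 < Real.pi := Real.pi_pos
  refine ⟨(Real.sqrt T + C₀ + 1) / (Real.pi * a * Real.sqrt (2 * a)), ?_, ?_⟩
  · apply div_pos (by nlinarith [Real.sqrt_nonneg T]) (by positivity)
  intro x y t₁ t₂ ht₁ h12 h2T hr hrt₁
  set r := dist x y with hrdef
  set b := r / a with hbdef
  have hb_pos : 0 < b := div_pos hr ha
  have hbt₁ : b < t₁ := (div_lt_iff₀ ha).mpr (by linarith [hrt₁])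
  have hrt₂ : r < a * t₂ := lt_of_lt_of_le hrt₁ (by nlinarith)
  have hbt₂ : b < t₂ := (div_lt_iff₀ ha).mpr (by linarith [hrt₂])
  -- continuity of σ y on [0, ∞)
  have hcont : ContinuousOn (σ y) (Set.Ici 0) :=
    holder_continuousOn (σ y) γ hγ0 (fun t s h1 h2 => hσ_hold y t s h1 h2)
  -- rewrite the kernel after the change of variables u = t - τ
  have hker : ∀ t : ℝ, r < a * t → waveKernel a σ x y t =
      (1 / (2 * Real.pi * a)) * ∫ u in b..t, σ y (t - u) / Real.sqrt (a ^ 2 * u ^ 2 - r ^ 2) := by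
    intro t hrt
    rw [waveKernel, if_pos hrt]
    congr 1
    have h := intervalIntegral.integral_comp_sub_left
      (fun u => σ y (t - u) / Real.sqrt (a ^ 2 * u ^ 2 - r ^ 2)) t
      (a := (0 : ℝ)) (b := t - b)
    simp only [sub_sub_cancel, sub_zero] at h
    rw [← hrdef, ← hbdef, ← h]
  rw [hker t₁ hrt₁, hker t₂ hrt₂]
  -- notation
  set X := (t₂ - t₁) ^ γ with hXdef
  set Y := Real.sqrt (t₂ - t₁) with hYdef
  have hX0 : 0 ≤ X := Real.rpow_nonneg (by linarith) γ
  have hY0 : 0 ≤ Y := Real.sqrt_nonneg _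
  -- continuity helpers
  have hcomp : ∀ s c d : ℝ, 0 ≤ s - d → c ≤ d →
      ContinuousOn (fun u => σ y (s - u)) (Set.Icc c d) := by
    intro s c d hsd hcd
    apply hcont.comp ((continuous_const.sub continuous_id).continuousOn)
    intro u hu
    simp only [Set.mem_Ici, Pi.sub_apply, id_eq]
    have hud : u ≤ d := hu.2
    linarith
  -- the three applications of wk_aux
  have A1 := wk_aux a r ha hr b t₁ le_rfl hbt₁.le
      (fun u => σ y (t₁ - u)) C₀ (hcomp t₁ b t₁ (by linarith) hbt₁.le)
      (fun u hu => hσ_bdd y (t₁ - u) (by linarith [hu.2]))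
  have A2 := wk_aux a r ha hr b t₁ le_rfl hbt₁.le
      (fun u => σ y (t₂ - u)) C₀ (hcomp t₂ b t₁ (by linarith) hbt₁.le)
      (fun u hu => hσ_bdd y (t₂ - u) (by linarith [hu.2]))
  have A3 := wk_aux a r ha hr t₁ t₂ hbt₁.le h12
      (fun u => σ y (t₂ - u)) C₀ (hcomp t₂ t₁ t₂ (by linarith) h12)
      (fun u hu => hσ_bdd y (t₂ - u) (by linarith [hu.2]))
  have A4 := wk_aux a r ha hr b t₁ le_rfl hbt₁.le
      (fun u => σ y (t₁ - u) - σ y (t₂ - u)) X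
      (((hcomp t₁ b t₁ (by linarith) hbt₁.le).sub (hcomp t₂ b t₁ (by linarith) hbt₁.le)))
      (fun u hu => by
        have h := hσ_hold y (t₁ - u) (t₂ - u) (by linarith [hu.2]) (by linarith [hu.2])
        have he : |t₁ - u - (t₂ - u)| = t₂ - t₁ := by
          rw [show t₁ - u - (t₂ - u) = -(t₂ - t₁) by ring, abs_neg, abs_of_nonneg (by linarith)]
        rw [he] at h
        exact h)
  -- split the second integral
  have hsplit : (∫ u in b..t₂, σ y (t₂ - u) / Real.sqrt (a ^ 2 * u ^ 2 - r ^ 2)) =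
      (∫ u in b..t₁, σ y (t₂ - u) / Real.sqrt (a ^ 2 * u ^ 2 - r ^ 2)) +
      (∫ u in t₁..t₂, σ y (t₂ - u) / Real.sqrt (a ^ 2 * u ^ 2 - r ^ 2)) :=
    (intervalIntegral.integral_add_adjacent_intervals A2.1 A3.1).symm
  have hdiff : (∫ u in b..t₁, σ y (t₁ - u) / Real.sqrt (a ^ 2 * u ^ 2 - r ^ 2)) -
      (∫ u in b..t₁, σ y (t₂ - u) / Real.sqrt (a ^ 2 * u ^ 2 - r ^ 2)) =
      ∫ u in b..t₁, (σ y (t₁ - u) - σ y (t₂ - u)) / Real.sqrt (a ^ 2 * u ^ 2 - r ^ 2) := by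
    rw [← intervalIntegral.integral_sub A1.1 A2.1]
    congr 1
    ext u
    rw [sub_div]
  -- assemble the estimate
  have hc₀ : (0:ℝ) < 1 / (2 * Real.pi * a) := by positivity
  rw [← mul_sub, abs_mul, abs_of_pos hc₀]
  have hIneq : |(∫ u in b..t₁, σ y (t₁ - u) / Real.sqrt (a ^ 2 * u ^ 2 - r ^ 2)) -
      (∫ u in b..t₂, σ y (t₂ - u) / Real.sqrt (a ^ 2 * u ^ 2 - r ^ 2))| ≤
      X / Real.sqrt (2 * r * a) * (2 * Real.sqrt (t₁ - b)) +
      C₀ / Real.sqrt (2 * r * a) * (2 * Y) := by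
    rw [hsplit]
    have e1 : (∫ u in b..t₁, σ y (t₁ - u) / Real.sqrt (a ^ 2 * u ^ 2 - r ^ 2)) -
        ((∫ u in b..t₁, σ y (t₂ - u) / Real.sqrt (a ^ 2 * u ^ 2 - r ^ 2)) +
         (∫ u in t₁..t₂, σ y (t₂ - u) / Real.sqrt (a ^ 2 * u ^ 2 - r ^ 2))) =
        (∫ u in b..t₁, (σ y (t₁ - u) - σ y (t₂ - u)) / Real.sqrt (a ^ 2 * u ^ 2 - r ^ 2)) -
        (∫ u in t₁..t₂, σ y (t₂ - u) / Real.sqrt (a ^ 2 * u ^ 2 - r ^ 2)) := by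
      rw [← hdiff]; ring
    rw [e1]
    have hS : 0 < Real.sqrt (2 * r * a) := Real.sqrt_pos.2 (by positivity)
    have hb4 : |∫ u in b..t₁, (σ y (t₁ - u) - σ y (t₂ - u)) / Real.sqrt (a ^ 2 * u ^ 2 - r ^ 2)| ≤
        X / Real.sqrt (2 * r * a) * (2 * Real.sqrt (t₁ - b)) := by
      refine le_trans A4.2 ?_
      have : Real.sqrt (b - b) = 0 := by simp
      rw [this]
      apply mul_le_mul_of_nonneg_left (by linarith) (by positivity)
    have hb3 : |∫ u in t₁..t₂, σ y (t₂ - u) / Real.sqrt (a ^ 2 * u ^ 2 - r ^ 2)| ≤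
        C₀ / Real.sqrt (2 * r * a) * (2 * Y) := by
      refine le_trans A3.2 ?_
      have hsub : Real.sqrt (t₂ - b) - Real.sqrt (t₁ - b) ≤ Y := by
        have := sqrt_sub_sqrt_le (t₂ - b) (t₁ - b) (by linarith) (by linarith)
        rw [show t₂ - b - (t₁ - b) = t₂ - t₁ by ring] at this
        exact this
      apply mul_le_mul_of_nonneg_left (by linarith) (by positivity)
    calc |(∫ u in b..t₁, (σ y (t₁ - u) - σ y (t₂ - u)) / Real.sqrt (a ^ 2 * u ^ 2 - r ^ 2)) -
        (∫ u in t₁..t₂, σ y (t₂ - u) / Real.sqrt (a ^ 2 * u ^ 2 - r ^ 2))| ≤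
        |∫ u in b..t₁, (σ y (t₁ - u) - σ y (t₂ - u)) / Real.sqrt (a ^ 2 * u ^ 2 - r ^ 2)| +
        |∫ u in t₁..t₂, σ y (t₂ - u) / Real.sqrt (a ^ 2 * u ^ 2 - r ^ 2)| := abs_sub _ _
      _ ≤ X / Real.sqrt (2 * r * a) * (2 * Real.sqrt (t₁ - b)) +
          C₀ / Real.sqrt (2 * r * a) * (2 * Y) := add_le_add hb4 hb3
  -- final algebra
  have hsT : Real.sqrt (t₁ - b) ≤ Real.sqrt T := Real.sqrt_le_sqrt (by linarith)
  have hS : 0 < Real.sqrt (2 * r * a) := Real.sqrt_pos.2 (by positivity)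
  have hSr : Real.sqrt (2 * r * a) = Real.sqrt (2 * a) * Real.sqrt r := by
    rw [show 2 * r * a = 2 * a * r by ring, Real.sqrt_mul (by positivity) r]
  have hsr : 0 < Real.sqrt r := Real.sqrt_pos.2 hr
  have hs2a : 0 < Real.sqrt (2 * a) := Real.sqrt_pos.2 (by positivity)
  calc (1 / (2 * Real.pi * a)) *
        |(∫ u in b..t₁, σ y (t₁ - u) / Real.sqrt (a ^ 2 * u ^ 2 - r ^ 2)) -
         (∫ u in b..t₂, σ y (t₂ - u) / Real.sqrt (a ^ 2 * u ^ 2 - r ^ 2))| ≤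
      (1 / (2 * Real.pi * a)) *
        (X / Real.sqrt (2 * r * a) * (2 * Real.sqrt (t₁ - b)) +
         C₀ / Real.sqrt (2 * r * a) * (2 * Y)) :=
      mul_le_mul_of_nonneg_left hIneq hc₀.le
    _ ≤ (1 / (2 * Real.pi * a)) *
        (X / Real.sqrt (2 * r * a) * (2 * Real.sqrt T) +
         C₀ / Real.sqrt (2 * r * a) * (2 * Y)) := by
      apply mul_le_mul_of_nonneg_left ?_ hc₀.le
      apply add_le_add ?_ le_rfl
      apply mul_le_mul_of_nonneg_left (by linarith) (by positivity)
    _ = (Real.sqrt T * X + C₀ * Y) / (Real.pi * a * (Real.sqrt (2 * a) * Real.sqrt r)) := by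
      rw [hSr]
      field_simp
    _ ≤ ((Real.sqrt T + C₀ + 1) * (X + Y)) / (Real.pi * a * (Real.sqrt (2 * a) * Real.sqrt r)) := by
      apply div_le_div_of_nonneg_right ?_ (by positivity)
      nlinarith [Real.sqrt_nonneg T, hX0, hY0, hC₀]
    _ = (Real.sqrt T + C₀ + 1) / (Real.pi * a * Real.sqrt (2 * a)) * (X + Y) / Real.sqrt r := by
      rw [div_mul_eq_mul_div, div_div]
      congr 1
      ring
end
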